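/- arXiv:2510.07391 — 3 statements merged into one kernel-verified Lean document; each statement's English description precedes it below -/
import Mathlib

section
/- Let G be a group, K a subgroup of G, ρ : K → ℂ^× a group homomorphism, and let s, z ∈ G satisfy sKs^{−1} = K, zKz^{−1} = K, ρ(sks^{−1}) = ρ(k) and ρ(zkz^{−1}) = ρ(k) for all k ∈ K, and suppose the commutator [s, z] := s z s^{−1} z^{−1} lies in K. Then for all k, k′ ∈ K, the commutator [sk, zk′] lies in K and ρ([sk, zk′]) = ρ([s, z]). In particular, if ρ([s, z]) ≠ 1, then sk and zk′ do not commute for any k, k′ ∈ K. -/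
theorem stmt13
    (G : Type) [Group G] (K : Subgroup G) (ρ : ↥K →* ℂˣ) (s z : G)
    (hsK : ∀ k : G, s * k * s⁻¹ ∈ K ↔ k ∈ K)
    (hzK : ∀ k : G, z * k * z⁻¹ ∈ K ↔ k ∈ K)
    (hsρ : ∀ (k : G) (hk : k ∈ K), ρ ⟨s * k * s⁻¹, (hsK k).2 hk⟩ = ρ ⟨k, hk⟩)
    (hzρ : ∀ (k : G) (hk : k ∈ K), ρ ⟨z * k * z⁻¹, (hzK k).2 hk⟩ = ρ ⟨k, hk⟩)
    (hc : s * z * s⁻¹ * z⁻¹ ∈ K) :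
    ∀ k k' : G, k ∈ K → k' ∈ K →
      ∃ h : (s * k) * (z * k') * (s * k)⁻¹ * (z * k')⁻¹ ∈ K,
        ρ ⟨(s * k) * (z * k') * (s * k)⁻¹ * (z * k')⁻¹, h⟩ = ρ ⟨s * z * s⁻¹ * z⁻¹, hc⟩ ∧
        (ρ ⟨s * z * s⁻¹ * z⁻¹, hc⟩ ≠ 1 → (s * k) * (z * k') ≠ (z * k') * (s * k)) := by
  intro k k' hk hk'
  have hzk' : z * k' * z⁻¹ ∈ K := (hzK k').2 hk'
  have hzk : z * k⁻¹ * z⁻¹ ∈ K := (hzK k⁻¹).2 (K.inv_mem hk)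
  have hA : s * k * s⁻¹ ∈ K := (hsK k).2 hk
  have hB : s * (z * k' * z⁻¹) * s⁻¹ ∈ K := (hsK _).2 hzk'
  have hC : s * (z * k⁻¹ * z⁻¹) * s⁻¹ ∈ K := (hsK _).2 hzk
  have hE : z * k'⁻¹ * z⁻¹ ∈ K := (hzK k'⁻¹).2 (K.inv_mem hk')
  have hprod : (s * k) * (z * k') * (s * k)⁻¹ * (z * k')⁻¹
      = (s * k * s⁻¹) * (s * (z * k' * z⁻¹) * s⁻¹) * (s * (z * k⁻¹ * z⁻¹) * s⁻¹)
        * (s * z * s⁻¹ * z⁻¹) * (z * k'⁻¹ * z⁻¹) := by group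
  have h : (s * k) * (z * k') * (s * k)⁻¹ * (z * k')⁻¹ ∈ K := by
    rw [hprod]
    exact K.mul_mem (K.mul_mem (K.mul_mem (K.mul_mem hA hB) hC) hc) hE
  have key : (⟨(s * k) * (z * k') * (s * k)⁻¹ * (z * k')⁻¹, h⟩ : K)
      = (⟨_, hA⟩ : K) * ⟨_, hB⟩ * ⟨_, hC⟩ * ⟨_, hc⟩ * ⟨_, hE⟩ := by
    ext
    simpa using hprod
  have eA : ρ ⟨s * k * s⁻¹, hA⟩ = ρ ⟨k, hk⟩ := hsρ k hk
  have eB : ρ ⟨s * (z * k' * z⁻¹) * s⁻¹, hB⟩ = ρ ⟨k', hk'⟩ := by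
    rw [show hB = (hsK _).2 hzk' from rfl, hsρ _ hzk', hzρ k' hk']
  have eC : ρ ⟨s * (z * k⁻¹ * z⁻¹) * s⁻¹, hC⟩ = (ρ ⟨k, hk⟩)⁻¹ := by
    rw [show hC = (hsK _).2 hzk from rfl, hsρ _ hzk, hzρ k⁻¹ (K.inv_mem hk)]
    rw [show (⟨k⁻¹, K.inv_mem hk⟩ : K) = (⟨k, hk⟩ : K)⁻¹ from rfl, map_inv]
  have eE : ρ ⟨z * k'⁻¹ * z⁻¹, hE⟩ = (ρ ⟨k', hk'⟩)⁻¹ := by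
    rw [show hE = (hzK _).2 (K.inv_mem hk') from rfl, hzρ k'⁻¹ (K.inv_mem hk')]
    rw [show (⟨k'⁻¹, K.inv_mem hk'⟩ : K) = (⟨k', hk'⟩ : K)⁻¹ from rfl, map_inv]
  have heq : ρ ⟨(s * k) * (z * k') * (s * k)⁻¹ * (z * k')⁻¹, h⟩
      = ρ ⟨s * z * s⁻¹ * z⁻¹, hc⟩ := by
    rw [key, map_mul, map_mul, map_mul, map_mul, eA, eB, eC, eE]
    set a := ρ ⟨k, hk⟩
    set b := ρ ⟨k', hk'⟩
    set d := ρ (⟨s * z * s⁻¹ * z⁻¹, hc⟩ : K)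
    have h1 : a * b * a⁻¹ = b := by rw [mul_comm a b]; group
    rw [h1, mul_comm b d]
    group
  refine ⟨h, heq, fun hne hcomm => ?_⟩
  have hone : (s * k) * (z * k') * (s * k)⁻¹ * (z * k')⁻¹ = 1 := by
    rw [hcomm]; group
  have : (⟨(s * k) * (z * k') * (s * k)⁻¹ * (z * k')⁻¹, h⟩ : K) = 1 := by
    ext; simpa using hone
  rw [this, map_one] at heq
  exact hne heq.symm
end

section
/- There is no group homomorphism ρ† : N → ℂ^× whose restriction to K_{M⁰} equals ρ_{M⁰}, where N := M⁰ ∪ s̃·M⁰ is the normalizer of M⁰ in G⁰; that is, the character ρ_{M⁰} does not extend to N(ρ_{M⁰}). -/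
open Matrix
open scoped Classical

noncomputable section

/-! ## The extension of a character of `Fˣ` to `F` by zero -/

/-- The extension of a homomorphism `η : Fˣ → ℂˣ` to a function `F → ℂ` by zero. -/
def etaExt {F : Type} [Field F] (η : Fˣ →* ℂˣ) (x : F) : ℂ :=
  if h : x = 0 then 0 else (η (Units.mk0 x h) : ℂ)

section Setup

variable (F : Type) [Field F] (O : ValuationSubring F)

/-- For a field extension `E` of `F`, the valuation subring `O` of `F` acts on `E`. -/
instance valAlg (E : Type) [Field E] [Algebra F E] : Algebra ↥O E :=
  ((algebraMap F E).comp (algebraMap ↥O F)).toAlgebra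

/-- `x` is a unit of the integral closure `O_E` of `O` in `E`. -/
def IsUnitOfIC (E : Type) [Field E] [Algebra F E] (x : E) : Prop :=
  x ≠ 0 ∧ x ∈ integralClosure ↥O E ∧ x⁻¹ ∈ integralClosure ↥O E

/-- `x` lies in the maximal ideal `𝔭_E` of the integral closure `O_E` of `O` in `E`
(i.e. `x` belongs to `O_E` but is not a unit of `O_E`). -/
def InMaxIC (E : Type) [Field E] [Algebra F E] (x : E) : Prop :=
  x ∈ integralClosure ↥O E ∧ ¬ IsUnitOfIC F O E x

variable (E₂ E₄ : Type) [Field E₂] [Algebra F E₂] [Field E₄] [Algebra F E₄]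

/-- The condition cutting out `G⁰ ⊆ GL₂(E₂) × E₄ˣ`, namely
`N_{E₂/F}(det g) · N_{E₄/F}(z) = 1`. -/
def normCond (p : (Matrix (Fin 2) (Fin 2) E₂)ˣ × E₄ˣ) : Prop :=
  Algebra.norm F (p.1.val.det) * Algebra.norm F p.2.val = 1

/-- The first (matrix) component of `p` is a diagonal matrix. -/
def diagP (p : (Matrix (Fin 2) (Fin 2) E₂)ˣ × E₄ˣ) : Prop :=
  p.1.val 0 1 = 0 ∧ p.1.val 1 0 = 0

/-- The first (matrix) component of `p` is an antidiagonal matrix. -/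
def antidiagP (p : (Matrix (Fin 2) (Fin 2) E₂)ˣ × E₄ˣ) : Prop :=
  p.1.val 0 0 = 0 ∧ p.1.val 1 1 = 0

/-- The group `G⁰ = (GL₂(E₂) × E₄ˣ) ∩ SL₈(F)`, as a subset of `GL₂(E₂) × E₄ˣ`. -/
def G0set : Set ((Matrix (Fin 2) (Fin 2) E₂)ˣ × E₄ˣ) := {p | normCond F E₂ E₄ p}

/-- The Levi subgroup `M⁰` of `G⁰`: the elements `(diag(x,y), z)` of `G⁰`. -/
def M0set : Set ((Matrix (Fin 2) (Fin 2) E₂)ˣ × E₄ˣ) :=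
  {p | normCond F E₂ E₄ p ∧ diagP E₂ E₄ p}

/-- `K_{M⁰}`: the elements `(diag(x,y), z)` of `M⁰` with `x, y ∈ O_{E₂}ˣ` and
`z ∈ O_{E₄}ˣ`. -/
def KM0set : Set ((Matrix (Fin 2) (Fin 2) E₂)ˣ × E₄ˣ) :=
  {p | p ∈ M0set F E₂ E₄ ∧ IsUnitOfIC F O E₂ (p.1.val 0 0) ∧
    IsUnitOfIC F O E₂ (p.1.val 1 1) ∧ IsUnitOfIC F O E₄ p.2.val}

/-- The element `s̃ = ((0,1;-1,0), 1)` of `G⁰`, the matrix component as a unit. -/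
def sUnit : (Matrix (Fin 2) (Fin 2) E₂)ˣ where
  val := !![0, 1; -1, 0]
  inv := !![0, -1; 1, 0]
  val_inv := by
    ext i j; fin_cases i <;> fin_cases j <;>
      simp [Matrix.mul_apply, Fin.sum_univ_two, Matrix.one_apply]
  inv_val := by
    ext i j; fin_cases i <;> fin_cases j <;>
      simp [Matrix.mul_apply, Fin.sum_univ_two, Matrix.one_apply]

/-- The element `s̃ = ((0,1;-1,0), 1)` of `G⁰`. -/
def sElt : (Matrix (Fin 2) (Fin 2) E₂)ˣ × E₄ˣ := (sUnit E₂, 1)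

section lemmas

variable {F E₂ E₄}

lemma normCond_one : normCond F E₂ E₄ 1 := by
  simp [normCond]

lemma normCond_mul {p q : (Matrix (Fin 2) (Fin 2) E₂)ˣ × E₄ˣ}
    (hp : normCond F E₂ E₄ p) (hq : normCond F E₂ E₄ q) : normCond F E₂ E₄ (p * q) := by
  unfold normCond at *
  simp only [Prod.fst_mul, Prod.snd_mul, Units.val_mul, Matrix.det_mul, _root_.map_mul]
  rw [mul_mul_mul_comm, hp, hq, mul_one]

lemma fst_val_mul_inv (p : (Matrix (Fin 2) (Fin 2) E₂)ˣ × E₄ˣ) :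
    p.1.val * (p⁻¹).1.val = 1 := by
  rw [← Units.val_mul, ← Prod.fst_mul, mul_inv_cancel, Prod.fst_one, Units.val_one]

lemma fst_val_inv_mul (p : (Matrix (Fin 2) (Fin 2) E₂)ˣ × E₄ˣ) :
    (p⁻¹).1.val * p.1.val = 1 := by
  rw [← Units.val_mul, ← Prod.fst_mul, inv_mul_cancel, Prod.fst_one, Units.val_one]

lemma normCond_inv {p : (Matrix (Fin 2) (Fin 2) E₂)ˣ × E₄ˣ}
    (hp : normCond F E₂ E₄ p) : normCond F E₂ E₄ p⁻¹ := by
  unfold normCond at *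
  have h2 : Algebra.norm F (p.1.val.det) * Algebra.norm F ((p⁻¹).1.val.det) = 1 := by
    rw [← _root_.map_mul, ← Matrix.det_mul, fst_val_mul_inv, Matrix.det_one, _root_.map_one]
  have h3 : Algebra.norm F p.2.val * Algebra.norm F ((p⁻¹).2.val) = 1 := by
    rw [← _root_.map_mul, ← Units.val_mul, ← Prod.snd_mul, mul_inv_cancel, Prod.snd_one,
      Units.val_one, _root_.map_one]
  calc Algebra.norm F ((p⁻¹).1.val.det) * Algebra.norm F ((p⁻¹).2.val)
      = (Algebra.norm F (p.1.val.det) * Algebra.norm F p.2.val) *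
        (Algebra.norm F ((p⁻¹).1.val.det) * Algebra.norm F ((p⁻¹).2.val)) := by
        rw [hp, one_mul]
    _ = (Algebra.norm F (p.1.val.det) * Algebra.norm F ((p⁻¹).1.val.det)) *
        (Algebra.norm F p.2.val * Algebra.norm F ((p⁻¹).2.val)) := by ring
    _ = 1 := by rw [h2, h3, mul_one]

lemma diagP_one : diagP E₂ E₄ 1 := by
  constructor <;> simp [diagP, Matrix.one_apply]

lemma diagP_mul {p q : (Matrix (Fin 2) (Fin 2) E₂)ˣ × E₄ˣ}
    (hp : diagP E₂ E₄ p) (hq : diagP E₂ E₄ q) : diagP E₂ E₄ (p * q) := by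
  obtain ⟨h1, h2⟩ := hp; obtain ⟨h3, h4⟩ := hq
  unfold diagP at *
  constructor <;>
    simp [Prod.fst_mul, Units.val_mul, Matrix.mul_apply, Fin.sum_univ_two, h1, h2, h3, h4]

lemma antidiagP_mul_antidiagP {p q : (Matrix (Fin 2) (Fin 2) E₂)ˣ × E₄ˣ}
    (hp : antidiagP E₂ E₄ p) (hq : antidiagP E₂ E₄ q) : diagP E₂ E₄ (p * q) := by
  obtain ⟨h1, h2⟩ := hp; obtain ⟨h3, h4⟩ := hq
  unfold diagP
  constructor <;>
    simp [Prod.fst_mul, Units.val_mul, Matrix.mul_apply, Fin.sum_univ_two, h1, h2, h3, h4]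

lemma diagP_mul_antidiagP {p q : (Matrix (Fin 2) (Fin 2) E₂)ˣ × E₄ˣ}
    (hp : diagP E₂ E₄ p) (hq : antidiagP E₂ E₄ q) : antidiagP E₂ E₄ (p * q) := by
  obtain ⟨h1, h2⟩ := hp; obtain ⟨h3, h4⟩ := hq
  unfold antidiagP
  constructor <;>
    simp [Prod.fst_mul, Units.val_mul, Matrix.mul_apply, Fin.sum_univ_two, h1, h2, h3, h4]

lemma antidiagP_mul_diagP {p q : (Matrix (Fin 2) (Fin 2) E₂)ˣ × E₄ˣ}
    (hp : antidiagP E₂ E₄ p) (hq : diagP E₂ E₄ q) : antidiagP E₂ E₄ (p * q) := by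
  obtain ⟨h1, h2⟩ := hp; obtain ⟨h3, h4⟩ := hq
  unfold antidiagP
  constructor <;>
    simp [Prod.fst_mul, Units.val_mul, Matrix.mul_apply, Fin.sum_univ_two, h1, h2, h3, h4]

lemma one_matrix_apply_01 : (1 : Matrix (Fin 2) (Fin 2) E₂) 0 1 = 0 := by simp
lemma one_matrix_apply_10 : (1 : Matrix (Fin 2) (Fin 2) E₂) 1 0 = 0 := by simp
lemma one_matrix_apply_00 : (1 : Matrix (Fin 2) (Fin 2) E₂) 0 0 = 1 := by simp
lemma one_matrix_apply_11 : (1 : Matrix (Fin 2) (Fin 2) E₂) 1 1 = 1 := by simp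

lemma diagP_inv {p : (Matrix (Fin 2) (Fin 2) E₂)ˣ × E₄ˣ}
    (hp : diagP E₂ E₄ p) : diagP E₂ E₄ p⁻¹ := by
  obtain ⟨h1, h2⟩ := hp
  have hPQ := fst_val_mul_inv p
  have hQP := fst_val_inv_mul p
  have e00 : p.1.val 0 0 * (p⁻¹).1.val 0 0 = 1 := by
    have h := congrFun (congrFun hPQ 0) 0
    rwa [Matrix.mul_apply, Fin.sum_univ_two, h1, zero_mul, add_zero,
      one_matrix_apply_00] at h
  have e11 : p.1.val 1 1 * (p⁻¹).1.val 1 1 = 1 := by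
    have h := congrFun (congrFun hPQ 1) 1
    rwa [Matrix.mul_apply, Fin.sum_univ_two, h2, zero_mul, zero_add,
      one_matrix_apply_11] at h
  constructor
  · have h := congrFun (congrFun hQP 0) 1
    rw [Matrix.mul_apply, Fin.sum_univ_two, h1, mul_zero, zero_add,
      one_matrix_apply_01] at h
    rcases mul_eq_zero.1 h with h' | h'
    · exact h'
    · exact absurd h' (left_ne_zero_of_mul_eq_one e11)
  · have h := congrFun (congrFun hQP 1) 0
    rw [Matrix.mul_apply, Fin.sum_univ_two, h2, mul_zero, add_zero,
      one_matrix_apply_10] at h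
    rcases mul_eq_zero.1 h with h' | h'
    · exact h'
    · exact absurd h' (left_ne_zero_of_mul_eq_one e00)

lemma antidiagP_inv {p : (Matrix (Fin 2) (Fin 2) E₂)ˣ × E₄ˣ}
    (hp : antidiagP E₂ E₄ p) : antidiagP E₂ E₄ p⁻¹ := by
  obtain ⟨h1, h2⟩ := hp
  have hPQ := fst_val_mul_inv p
  have hQP := fst_val_inv_mul p
  have e01 : p.1.val 0 1 * (p⁻¹).1.val 1 0 = 1 := by
    have h := congrFun (congrFun hPQ 0) 0
    rwa [Matrix.mul_apply, Fin.sum_univ_two, h1, zero_mul, zero_add,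
      one_matrix_apply_00] at h
  have e10 : p.1.val 1 0 * (p⁻¹).1.val 0 1 = 1 := by
    have h := congrFun (congrFun hPQ 1) 1
    rwa [Matrix.mul_apply, Fin.sum_univ_two, h2, zero_mul, add_zero,
      one_matrix_apply_11] at h
  constructor
  · have h := congrFun (congrFun hQP 0) 1
    rw [Matrix.mul_apply, Fin.sum_univ_two, h2, mul_zero, add_zero,
      one_matrix_apply_01] at h
    rcases mul_eq_zero.1 h with h' | h'
    · exact h'
    · exact absurd h' (left_ne_zero_of_mul_eq_one e01)
  · have h := congrFun (congrFun hQP 1) 0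
    rw [Matrix.mul_apply, Fin.sum_univ_two, h1, mul_zero, zero_add,
      one_matrix_apply_10] at h
    rcases mul_eq_zero.1 h with h' | h'
    · exact h'
    · exact absurd h' (left_ne_zero_of_mul_eq_one e10)

end lemmas

/-- The Levi subgroup `M⁰` of `G⁰`, as a subgroup of `GL₂(E₂) × E₄ˣ`. -/
def Msub : Subgroup ((Matrix (Fin 2) (Fin 2) E₂)ˣ × E₄ˣ) where
  carrier := M0set F E₂ E₄
  one_mem' := ⟨normCond_one, diagP_one⟩
  mul_mem' := fun hp hq => ⟨normCond_mul hp.1 hq.1, diagP_mul hp.2 hq.2⟩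
  inv_mem' := fun hp => ⟨normCond_inv hp.1, diagP_inv hp.2⟩

/-- The normalizer `N = M⁰ ∪ s̃·M⁰` of `M⁰` in `G⁰`, as a subgroup of
`GL₂(E₂) × E₄ˣ`; concretely, it consists of the elements of `G⁰` whose matrix
component is diagonal or antidiagonal. -/
def Nsub : Subgroup ((Matrix (Fin 2) (Fin 2) E₂)ˣ × E₄ˣ) where
  carrier := {p | normCond F E₂ E₄ p ∧ (diagP E₂ E₄ p ∨ antidiagP E₂ E₄ p)}
  one_mem' := ⟨normCond_one, Or.inl diagP_one⟩
  mul_mem' := by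
    rintro p q ⟨hp1, hp2⟩ ⟨hq1, hq2⟩
    refine ⟨normCond_mul hp1 hq1, ?_⟩
    rcases hp2 with hp2 | hp2 <;> rcases hq2 with hq2 | hq2
    · exact Or.inl (diagP_mul hp2 hq2)
    · exact Or.inr (diagP_mul_antidiagP hp2 hq2)
    · exact Or.inr (antidiagP_mul_diagP hp2 hq2)
    · exact Or.inl (antidiagP_mul_antidiagP hp2 hq2)
  inv_mem' := by
    rintro p ⟨hp1, hp2⟩
    exact ⟨normCond_inv hp1, hp2.elim (fun h => Or.inl (diagP_inv h))
      (fun h => Or.inr (antidiagP_inv h))⟩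

end Setup

section Aux

/-- STATEMENT 12 auxiliary: `K⁰_{M⁰}`, the subgroup of `K_{M⁰}` of elements
`(diag(x,y),z)` whose residues satisfy `(xy mod 𝔭_{E₂})·(z mod 𝔭_{E₄})² = 1`,
expressed as: there is `k : ℤ` with `xy·ζ^{-k} ∈ 1 + 𝔭_{E₂}` and
`z²·ζ^{k} ∈ 1 + 𝔭_{E₄}`. Here `ζF` denotes the image of `ζ` in `F`. -/
def KM0zeroSet (F : Type) [Field F] (O : ValuationSubring F)
    (E₂ E₄ : Type) [Field E₂] [Algebra F E₂] [Field E₄] [Algebra F E₄] (ζF : F) :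
    Set ((Matrix (Fin 2) (Fin 2) E₂)ˣ × E₄ˣ) :=
  {p | p ∈ KM0set F O E₂ E₄ ∧ ∃ k : ℤ,
    InMaxIC F O E₂ (p.1.val 0 0 * p.1.val 1 1 * (algebraMap F E₂ ζF) ^ (-k) - 1) ∧
    InMaxIC F O E₄ (p.2.val ^ 2 * (algebraMap F E₄ ζF) ^ k - 1)}

end Aux


/-- Auxiliary: the norm of a generator `x` of a field extension with `x ^ n = -c`. -/
lemma norm_gen_aux {F E : Type} [Field F] [Field E] [Algebra F E] [FiniteDimensional F E]
    {n : ℕ} (hn : 0 < n) (hrank : Module.finrank F E = n) {x : E} {c : F}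
    (hx : x ^ n = algebraMap F E (-c)) (hgen : Algebra.adjoin F {x} = ⊤) :
    Algebra.norm F x = (-1) ^ n * c := by
  have hint : IsIntegral F x := IsIntegral.of_finite F x
  have htop : IntermediateField.adjoin F {x} = ⊤ := by
    refine eq_top_iff.2 fun y _ => ?_
    exact IntermediateField.algebra_adjoin_le_adjoin F {x} (hgen ▸ Algebra.mem_top)
  have hdeg : (minpoly F x).natDegree = n := by
    have h1 := IntermediateField.adjoin.finrank hint
    rw [htop, IntermediateField.finrank_top', hrank] at h1
    exact h1.symm
  set P : Polynomial F := Polynomial.X ^ n + Polynomial.C c with hP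
  have hPm : P.Monic := Polynomial.monic_X_pow_add_C c hn.ne'
  have hPdeg : P.natDegree = n := Polynomial.natDegree_X_pow_add_C
  have hroot : Polynomial.aeval x P = 0 := by
    rw [hP]
    simp only [map_add, Polynomial.aeval_X_pow, Polynomial.aeval_C, hx, map_neg]
    ring
  have hmp : minpoly F x = P :=
    Polynomial.eq_of_monic_of_associated (minpoly.monic hint) hPm
      (Polynomial.associated_of_dvd_of_natDegree_le (minpoly.dvd F x hroot) hPm.ne_zero
        (by rw [hPdeg, hdeg]))
  let e : (IntermediateField.adjoin F {x}) ≃ₐ[F] E :=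
    (IntermediateField.equivOfEq htop).trans IntermediateField.topEquiv
  let pb := (IntermediateField.adjoin.powerBasis hint).map e
  have hgen' : pb.gen = x := rfl
  have hdim : pb.dim = n := by
    rw [← hrank]; exact pb.finrank.symm
  have hnorm := Algebra.PowerBasis.norm_gen_eq_coeff_zero_minpoly pb
  rw [hgen', hdim, hmp] at hnorm
  rw [hnorm, hP]
  have h0 : (0 : ℕ) ≠ n := hn.ne'.symm
  simp [Polynomial.coeff_X_pow, if_neg h0]

theorem stmt15
    (F : Type) [Field F] (O : ValuationSubring F) [IsDiscreteValuationRing ↥O]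
    (hcomplete : IsAdicComplete (IsLocalRing.maximalIdeal ↥O) ↥O)
    (q : ℕ) [Finite (IsLocalRing.ResidueField ↥O)]
    (hq : Nat.card (IsLocalRing.ResidueField ↥O) = q)
    (hqodd : Odd q) (hq4 : 4 ∣ q - 1)
    (ϖ : ↥O) (hϖ : Irreducible ϖ)
    (ζ : (↥O)ˣ) (hζ : orderOf ζ = q - 1)
    (E₂ : Type) [Field E₂] [Algebra F E₂] [FiniteDimensional F E₂]
    (hrank2 : Module.finrank F E₂ = 2)
    (ϖ₂ : E₂) (hϖ₂ : ϖ₂ ^ 2 = algebraMap F E₂ (-(ϖ : F)))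
    (hgen2 : Algebra.adjoin F {ϖ₂} = ⊤)
    (E₄ : Type) [Field E₄] [Algebra F E₄] [FiniteDimensional F E₄]
    (hrank4 : Module.finrank F E₄ = 4)
    (ϖ₄ : E₄) (hϖ₄ : ϖ₄ ^ 4 = algebraMap F E₄ (-(((ζ : ↥O) : F) * (ϖ : F))))
    (hgen4 : Algebra.adjoin F {ϖ₄} = ⊤)
    (i : ℂ) (hi : i ^ 2 = -1)
    (η : Fˣ →* ℂˣ)
    (hηϖ : etaExt η ((ϖ : F)) = 1)
    (hη1 : ∀ m : ↥O, m ∈ IsLocalRing.maximalIdeal ↥O → etaExt η (((1 + m : ↥O) : F)) = 1)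
    (hηζ : etaExt η (((ζ : ↥O) : F)) = i) :
    ((Nsub F E₂ E₄ : Set ((Matrix (Fin 2) (Fin 2) E₂)ˣ × E₄ˣ)) =
      M0set F E₂ E₄ ∪ (fun m => sElt E₂ E₄ * m) '' M0set F E₂ E₄) ∧
    ¬ ∃ ρd : ↥(Nsub F E₂ E₄) →* ℂˣ,
        ∀ n : ↥(Nsub F E₂ E₄), n.val ∈ KM0set F O E₂ E₄ →
          (ρd n : ℂ) = etaExt η (Algebra.norm F (n.val.1.val 1 1)) := by
  classical
  -- Notation
  set ζF : F := ((ζ : ↥O) : F) with hζFdef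
  set ϖF : F := ((ϖ : ↥O) : F) with hϖFdef
  have hζF0 : ζF ≠ 0 := by
    simp only [hζFdef, ne_eq, ZeroMemClass.coe_eq_zero]
    exact ζ.ne_zero
  have hϖF0 : ϖF ≠ 0 := by
    simp only [hϖFdef, ne_eq, ZeroMemClass.coe_eq_zero]
    exact hϖ.ne_zero
  set c : F := ζF * ϖF with hcdef
  have hc0 : c ≠ 0 := mul_ne_zero hζF0 hϖF0
  have hinj₂ : Function.Injective (algebraMap F E₂) := (algebraMap F E₂).injective
  have hinj₄ : Function.Injective (algebraMap F E₄) := (algebraMap F E₄).injective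
  have hϖ₂0 : ϖ₂ ≠ 0 := by
    intro h
    apply hϖF0
    have h2 : algebraMap F E₂ (-ϖF) = algebraMap F E₂ 0 := by
      rw [map_zero, ← hϖ₂, h]; ring
    have := hinj₂ h2
    simpa [neg_eq_zero] using this
  have hϖ₄0 : ϖ₄ ≠ 0 := by
    intro h
    apply hc0
    have h2 : algebraMap F E₄ (-c) = algebraMap F E₄ 0 := by
      rw [map_zero, ← hϖ₄, h]; ring
    have := hinj₄ h2
    simpa [neg_eq_zero] using this
  have hnorm4 : Algebra.norm F ϖ₄ = c := by
    have h := norm_gen_aux (by norm_num : (0:ℕ) < 4) hrank4 hϖ₄ hgen4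
    norm_num at h
    exact h
  -- the element ζE of E₂ and its inverse
  set ζE : E₂ := algebraMap F E₂ ζF with hζEdef
  have hζE0 : ζE ≠ 0 := by rw [hζEdef, ne_eq, map_eq_zero]; exact hζF0
  -- the diagonal unit D
  set a : E₂ := ζE * ϖ₂ with hadef
  have ha0 : a ≠ 0 := mul_ne_zero hζE0 hϖ₂0
  set D : (Matrix (Fin 2) (Fin 2) E₂)ˣ :=
    ⟨!![a, 0; 0, ϖ₂], !![a⁻¹, 0; 0, ϖ₂⁻¹],
      by
        ext i j; fin_cases i <;> fin_cases j <;>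
          simp [Matrix.mul_apply, Fin.sum_univ_two, Matrix.one_apply,
            mul_inv_cancel₀ ha0, mul_inv_cancel₀ hϖ₂0],
      by
        ext i j; fin_cases i <;> fin_cases j <;>
          simp [Matrix.mul_apply, Fin.sum_univ_two, Matrix.one_apply,
            inv_mul_cancel₀ ha0, inv_mul_cancel₀ hϖ₂0]⟩ with hDdef
  set zU : E₄ˣ := (Units.mk0 ϖ₄ hϖ₄0)⁻¹ ^ 2 with hzUdef
  set m : (Matrix (Fin 2) (Fin 2) E₂)ˣ × E₄ˣ := (D, zU) with hmdef
  -- basic memberships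
  have hsN : normCond F E₂ E₄ (sElt E₂ E₄) := by
    unfold normCond sElt sUnit
    simp [Matrix.det_fin_two_of]
  have hsA : antidiagP E₂ E₄ (sElt E₂ E₄) := by
    unfold antidiagP sElt sUnit
    simp
  have hmN : normCond F E₂ E₄ m := by
    unfold normCond
    have hdet : m.1.val.det = algebraMap F E₂ (-c) := by
      show (!![a, 0; 0, ϖ₂] : Matrix (Fin 2) (Fin 2) E₂).det = _
      rw [Matrix.det_fin_two_of]
      have h1 : a * ϖ₂ - 0 * 0 = ζE * ϖ₂ ^ 2 := by rw [hadef]; ring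
      rw [h1, hϖ₂, hζEdef, ← _root_.map_mul]
      congr 1
      rw [hcdef]; ring
    have hz : m.2.val = ϖ₄⁻¹ ^ 2 := rfl
    have hn4i : Algebra.norm F ϖ₄⁻¹ = c⁻¹ := by
      have h1 : Algebra.norm F (ϖ₄ * ϖ₄⁻¹) = 1 := by
        rw [mul_inv_cancel₀ hϖ₄0, _root_.map_one]
      rw [_root_.map_mul, hnorm4] at h1
      exact eq_inv_of_mul_eq_one_left (by rw [mul_comm]; exact h1)
    rw [hdet, hz, Algebra.norm_algebraMap, hrank2, _root_.map_pow, hn4i]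
    rw [neg_pow]
    simp only [Even.neg_one_pow (by norm_num : Even 2), one_mul]
    rw [← mul_pow, mul_inv_cancel₀ hc0, one_pow]
  have hmD : diagP E₂ E₄ m := by
    constructor <;> rfl
  have hs : sElt E₂ E₄ ∈ Nsub F E₂ E₄ := ⟨hsN, Or.inr hsA⟩
  have hmmem : m ∈ Nsub F E₂ E₄ := ⟨hmN, Or.inl hmD⟩
  constructor
  · -- Part 1 : the set equality
    ext p
    simp only [SetLike.mem_coe, Set.mem_union, Set.mem_image]
    constructor
    · rintro ⟨h1, h2 | h2⟩
      · exact Or.inl ⟨h1, h2⟩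
      · refine Or.inr ⟨(sElt E₂ E₄)⁻¹ * p,
          ⟨normCond_mul (normCond_inv hsN) h1,
            antidiagP_mul_antidiagP (antidiagP_inv hsA) h2⟩, ?_⟩
        rw [← mul_assoc, mul_inv_cancel, one_mul]
    · rintro (⟨h1, h2⟩ | ⟨x, ⟨hx1, hx2⟩, rfl⟩)
      · exact ⟨h1, Or.inl h2⟩
      · exact ⟨normCond_mul hsN hx1, Or.inr (antidiagP_mul_diagP hsA hx2)⟩
  · -- Part 2 : no extension
    rintro ⟨ρd, hρd⟩
    set S : ↥(Nsub F E₂ E₄) := ⟨sElt E₂ E₄, hs⟩ with hSdef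
    set M : ↥(Nsub F E₂ E₄) := ⟨m, hmmem⟩ with hMdef
    set X : ↥(Nsub F E₂ E₄) := S * M * S⁻¹ * M⁻¹ with hXdef
    -- compute the matrix component of X
    have hX1 : (X.val).1.val = !![ζE⁻¹, 0; 0, ζE] := by
      show (!![(0:E₂), 1; -1, 0] * !![a, 0; 0, ϖ₂] * !![0, -1; 1, 0] *
        !![a⁻¹, 0; 0, ϖ₂⁻¹] : Matrix (Fin 2) (Fin 2) E₂) = _
      ext i j
      fin_cases i <;> fin_cases j <;>
        simp [Matrix.mul_apply, Fin.sum_univ_two, hadef, mul_inv] <;>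
        field_simp
    have hX2 : (X.val).2.val = 1 := by
      show ((1 : E₄ˣ) * zU * (1 : E₄ˣ)⁻¹ * zU⁻¹).val = 1
      simp
    -- X ∈ K_{M⁰}
    have hXN : normCond F E₂ E₄ X.val :=
      normCond_mul (normCond_mul (normCond_mul hsN hmN) (normCond_inv hsN)) (normCond_inv hmN)
    have hζinv : ζE⁻¹ = algebraMap F E₂ (((ζ⁻¹ : (↥O)ˣ) : ↥O) : F) := by
      have hmul : ζF * ((((ζ⁻¹ : (↥O)ˣ) : ↥O)) : F) = 1 := by
        have h2 := ζ.mul_inv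
        calc ζF * ((((ζ⁻¹ : (↥O)ˣ) : ↥O)) : F)
            = ((((ζ : ↥O) * ((ζ⁻¹ : (↥O)ˣ) : ↥O)) : ↥O) : F) := rfl
          _ = ((1 : ↥O) : F) := by rw [h2]
          _ = 1 := rfl
      refine (eq_inv_of_mul_eq_one_left ?_).symm
      rw [hζEdef, ← _root_.map_mul]
      rw [mul_comm] at hmul
      rw [hmul, _root_.map_one]
    have key₂ : ∀ w : ↥O, algebraMap F E₂ ((w : F)) ∈ integralClosure ↥O E₂ := fun w =>
      (integralClosure ↥O E₂).algebraMap_mem w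
    have hunit : ∀ u : (↥O)ˣ, IsUnitOfIC F O E₂ (algebraMap F E₂ (((u : ↥O) : F))) := by
      intro u
      have hu0 : (((u : ↥O) : F)) ≠ 0 := by
        simp only [ne_eq, ZeroMemClass.coe_eq_zero]
        exact u.ne_zero
      have huinv : (algebraMap F E₂ (((u : ↥O) : F)))⁻¹ =
          algebraMap F E₂ (((u⁻¹ : (↥O)ˣ) : ↥O) : F) := by
        have hmul : (((u : ↥O) : F)) * ((((u⁻¹ : (↥O)ˣ) : ↥O)) : F) = 1 := by
          have h2 := u.mul_inv
          calc (((u : ↥O) : F)) * ((((u⁻¹ : (↥O)ˣ) : ↥O)) : F)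
              = ((((u : ↥O) * ((u⁻¹ : (↥O)ˣ) : ↥O)) : ↥O) : F) := rfl
            _ = ((1 : ↥O) : F) := by rw [h2]
            _ = 1 := rfl
        refine (eq_inv_of_mul_eq_one_left ?_).symm
        rw [← _root_.map_mul, mul_comm, hmul, _root_.map_one]
      refine ⟨by rwa [ne_eq, map_eq_zero], key₂ _, ?_⟩
      rw [huinv]
      exact key₂ _
    have h00 : X.val.1.val 0 0 = ζE⁻¹ := by rw [hX1]; simp
    have h11 : X.val.1.val 1 1 = ζE := by rw [hX1]; simp
    have hXK : X.val ∈ KM0set F O E₂ E₄ := by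
      refine ⟨⟨hXN, ?_, ?_⟩, ?_, ?_, ?_⟩
      · show X.val.1.val 0 1 = 0
        rw [hX1]; simp
      · show X.val.1.val 1 0 = 0
        rw [hX1]; simp
      · rw [h00, hζinv]
        exact hunit ζ⁻¹
      · rw [h11, hζEdef]
        exact hunit ζ
      · rw [hX2]
        exact ⟨one_ne_zero, (integralClosure ↥O E₄).one_mem,
          by rw [inv_one]; exact (integralClosure ↥O E₄).one_mem⟩
    have h1 := hρd X hXK
    rw [h11, hζEdef, Algebra.norm_algebraMap, hrank2] at h1
    have hsq0 : ζF ^ 2 ≠ 0 := pow_ne_zero _ hζF0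
    have hrhs : etaExt η (ζF ^ 2) = -1 := by
      unfold etaExt at hηζ ⊢
      rw [dif_neg hsq0]
      rw [dif_neg hζF0] at hηζ
      have hmk : Units.mk0 (ζF ^ 2) hsq0 = (Units.mk0 ζF hζF0) ^ 2 := by
        ext; simp
      rw [hmk, _root_.map_pow, Units.val_pow_eq_pow_val, hηζ, hi]
    have hXone : ρd X = 1 := by
      rw [hXdef, _root_.map_mul, _root_.map_mul, _root_.map_mul, map_inv, map_inv]
      rw [mul_comm (ρd S) (ρd M)]
      group
    rw [hXone, hrhs] at h1
    have hfin : (1 : ℂ) = -1 := by simpa using h1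
    norm_num at hfin
end
end

section
/- The group homomorphism u ↦ η(N_{E₂/F}(u)) on O_{E₂}^× is trivial on the subgroup 1 + 𝔭_{E₂} but is not the trivial homomorphism on O_{E₂}^×; consequently, it descends to a nontrivial character χ of the finite group O_{E₂}^×/(1 + 𝔭_{E₂}), and the sum of χ(x) over all x ∈ O_{E₂}^×/(1 + 𝔭_{E₂}) equals 0. -/
open Matrix
open scoped Classical

noncomputable section

section Aux16

instance valTower (F : Type) [Field F] (O : ValuationSubring F) (E : Type) [Field E]
    [Algebra F E] : IsScalarTower ↥O F E :=
  IsScalarTower.of_algebraMap_eq (fun _ => rfl)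

lemma aux_etaExt_pow {F : Type} [Field F] (η : Fˣ →* ℂˣ) {x : F} (h : x ≠ 0) (n : ℕ) :
    etaExt η (x ^ n) = etaExt η x ^ n := by
  rw [etaExt, etaExt, dif_neg (pow_ne_zero n h), dif_neg h]
  have h2 : Units.mk0 (x ^ n) (pow_ne_zero n h) = (Units.mk0 x h) ^ n := by
    ext; simp
  rw [h2, _root_.map_pow, Units.val_pow_eq_pow_val]

variable {F : Type} [Field F] {E₂ : Type} [Field E₂] [Algebra F E₂] [FiniteDimensional F E₂]

lemma aux_ne (hrank2 : Module.finrank F E₂ = 2) {ϖ₂ : E₂}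
    (hgen2 : Algebra.adjoin F {ϖ₂} = ⊤) (c : F) : algebraMap F E₂ c ≠ ϖ₂ := by
  intro h
  have hbot : Algebra.adjoin F {ϖ₂} ≤ ⊥ := by
    rw [Algebra.adjoin_le_iff]
    rintro x rfl
    rw [← h]; exact Subalgebra.algebraMap_mem ⊥ c
  have : (⊥ : Subalgebra F E₂) = ⊤ := le_antisymm le_top (hgen2 ▸ hbot)
  have h1 := Subalgebra.bot_eq_top_iff_finrank_eq_one.mp this
  rw [hrank2] at h1; omega

lemma aux_li (hrank2 : Module.finrank F E₂ = 2) {ϖ₂ : E₂}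
    (hgen2 : Algebra.adjoin F {ϖ₂} = ⊤) : LinearIndependent F ![(1 : E₂), ϖ₂] := by
  rw [linearIndependent_fin2]
  constructor
  · simpa using (aux_ne hrank2 hgen2 0).symm
  · intro a h
    simp only [Matrix.cons_val_one, Matrix.head_cons, Matrix.cons_val_zero] at h
    have ha : a ≠ 0 := by rintro rfl; simp at h
    apply aux_ne hrank2 hgen2 a⁻¹
    rw [Algebra.algebraMap_eq_smul_one, ← h, smul_smul, inv_mul_cancel₀ ha, one_smul]

def auxB (hrank2 : Module.finrank F E₂ = 2) {ϖ₂ : E₂}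
    (hgen2 : Algebra.adjoin F {ϖ₂} = ⊤) : Module.Basis (Fin 2) F E₂ :=
  basisOfLinearIndependentOfCardEqFinrank (aux_li hrank2 hgen2) (by simp [hrank2])

lemma auxB0 (hrank2 : Module.finrank F E₂ = 2) {ϖ₂ : E₂}
    (hgen2 : Algebra.adjoin F {ϖ₂} = ⊤) : auxB hrank2 hgen2 0 = 1 := by
  rw [auxB, coe_basisOfLinearIndependentOfCardEqFinrank]; rfl

lemma auxB1 (hrank2 : Module.finrank F E₂ = 2) {ϖ₂ : E₂}
    (hgen2 : Algebra.adjoin F {ϖ₂} = ⊤) : auxB hrank2 hgen2 1 = ϖ₂ := by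
  rw [auxB, coe_basisOfLinearIndependentOfCardEqFinrank]; rfl

lemma aux_repr (hrank2 : Module.finrank F E₂ = 2) {ϖ₂ : E₂}
    (hgen2 : Algebra.adjoin F {ϖ₂} = ⊤) (a b : F) :
    ((auxB hrank2 hgen2).repr (algebraMap F E₂ a + b • ϖ₂) 0 = a) ∧
    ((auxB hrank2 hgen2).repr (algebraMap F E₂ a + b • ϖ₂) 1 = b) := by
  set B := auxB hrank2 hgen2
  have h : algebraMap F E₂ a + b • ϖ₂ = a • B 0 + b • B 1 := by
    rw [auxB0 hrank2 hgen2, auxB1 hrank2 hgen2, Algebra.algebraMap_eq_smul_one]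
  rw [h, _root_.map_add, _root_.map_smul, _root_.map_smul, B.repr_self, B.repr_self]
  constructor <;> simp

lemma aux_coords (hrank2 : Module.finrank F E₂ = 2) {ϖ₂ : E₂}
    (hgen2 : Algebra.adjoin F {ϖ₂} = ⊤) (x : E₂) :
    x = algebraMap F E₂ ((auxB hrank2 hgen2).repr x 0) +
      ((auxB hrank2 hgen2).repr x 1) • ϖ₂ := by
  set B := auxB hrank2 hgen2 with hB
  conv_lhs => rw [← B.sum_repr x]
  rw [Fin.sum_univ_two, auxB0 hrank2 hgen2, auxB1 hrank2 hgen2,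
    Algebra.algebraMap_eq_smul_one]

lemma aux_norm_formula (hrank2 : Module.finrank F E₂ = 2) {ϖ₂ : E₂}
    (hgen2 : Algebra.adjoin F {ϖ₂} = ⊤) {w : F} (hϖ₂ : ϖ₂ ^ 2 = algebraMap F E₂ (-w))
    (a b : F) :
    Algebra.norm F (algebraMap F E₂ a + b • ϖ₂) = a ^ 2 + w * b ^ 2 := by
  set B : Module.Basis (Fin 2) F E₂ := auxB hrank2 hgen2 with hBdef
  set x := algebraMap F E₂ a + b • ϖ₂ with hx
  have h0 : x * B 0 = algebraMap F E₂ a + b • ϖ₂ := by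
    rw [hBdef, auxB0 hrank2 hgen2, mul_one]
  have h1 : x * B 1 = algebraMap F E₂ (-(w*b)) + a • ϖ₂ := by
    rw [hBdef, auxB1 hrank2 hgen2, hx, add_mul, smul_mul_assoc, ← sq, hϖ₂, Algebra.smul_def,
      ← _root_.map_mul, _root_.map_neg, _root_.map_mul, _root_.map_neg, ← Algebra.smul_def, _root_.map_mul]
    ring
  rw [Algebra.norm_eq_matrix_det B, Matrix.det_fin_two]
  rw [Algebra.leftMulMatrix_eq_repr_mul, Algebra.leftMulMatrix_eq_repr_mul,
    Algebra.leftMulMatrix_eq_repr_mul, Algebra.leftMulMatrix_eq_repr_mul,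
    h0, h1, (aux_repr hrank2 hgen2 a b).1, (aux_repr hrank2 hgen2 a b).2,
    (aux_repr hrank2 hgen2 (-(w*b)) a).1, (aux_repr hrank2 hgen2 (-(w*b)) a).2]
  ring

lemma aux_trace_formula (hrank2 : Module.finrank F E₂ = 2) {ϖ₂ : E₂}
    (hgen2 : Algebra.adjoin F {ϖ₂} = ⊤) {w : F} (hϖ₂ : ϖ₂ ^ 2 = algebraMap F E₂ (-w))
    (a b : F) :
    Algebra.trace F E₂ (algebraMap F E₂ a + b • ϖ₂) = 2 * a := by
  set B : Module.Basis (Fin 2) F E₂ := auxB hrank2 hgen2 with hBdef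
  set x := algebraMap F E₂ a + b • ϖ₂ with hx
  have h0 : x * B 0 = algebraMap F E₂ a + b • ϖ₂ := by
    rw [hBdef, auxB0 hrank2 hgen2, mul_one]
  have h1 : x * B 1 = algebraMap F E₂ (-(w*b)) + a • ϖ₂ := by
    rw [hBdef, auxB1 hrank2 hgen2, hx, add_mul, smul_mul_assoc, ← sq, hϖ₂, Algebra.smul_def,
      ← _root_.map_mul, _root_.map_neg, _root_.map_mul, _root_.map_neg, ← Algebra.smul_def, _root_.map_mul]
    ring
  rw [Algebra.trace_eq_matrix_trace B, Matrix.trace_fin_two]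
  rw [Algebra.leftMulMatrix_eq_repr_mul, Algebra.leftMulMatrix_eq_repr_mul,
    h0, h1, (aux_repr hrank2 hgen2 a b).1, (aux_repr hrank2 hgen2 (-(w*b)) a).2]
  ring

lemma aux_mul_formula {ϖ₂ : E₂} {w : F} (hϖ₂ : ϖ₂ ^ 2 = algebraMap F E₂ (-w))
    (a b c d : F) :
    (algebraMap F E₂ a + b • ϖ₂) * (algebraMap F E₂ c + d • ϖ₂) =
      algebraMap F E₂ (a * c - w * (b * d)) + (a * d + b * c) • ϖ₂ := by
  have h2 : ϖ₂ * ϖ₂ = -(algebraMap F E₂ w) := by rw [← sq, hϖ₂, _root_.map_neg]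
  simp only [Algebra.smul_def, _root_.map_add, _root_.map_sub, _root_.map_mul]
  linear_combination (algebraMap F E₂ b * algebraMap F E₂ d) * h2

variable (O : ValuationSubring F)

lemma aux_isUnit_iff {t : ↥O} : IsUnit t ↔ ((t:F) ≠ 0 ∧ ((t:F))⁻¹ ∈ O) := by
  constructor
  · rintro ⟨u, rfl⟩
    have h : ((u : ↥O) : F) * (((u⁻¹ : (↥O)ˣ) : ↥O) : F) = 1 := by
      rw [← Subring.coe_mul]
      norm_cast
      rw [mul_inv_cancel]
      rfl
    refine ⟨left_ne_zero_of_mul_eq_one h, ?_⟩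
    rw [inv_eq_of_mul_eq_one_right h]
    exact ((u⁻¹ : (↥O)ˣ) : ↥O).2
  · rintro ⟨h0, hinv⟩
    refine IsUnit.of_mul_eq_one (a := t) ⟨((t:F))⁻¹, hinv⟩ ?_
    apply Subtype.ext
    push_cast
    exact mul_inv_cancel₀ h0

variable [IsDiscreteValuationRing ↥O]

lemma aux_mem_O_iff (a : F) : a ∈ O ↔ IsIntegral ↥O a := by
  constructor
  · intro h; exact isIntegral_algebraMap (R := ↥O) (x := (⟨a, h⟩ : ↥O))
  · intro h
    have hfr : IsFractionRing ↥O F := by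
      have := (ValuationSubring.instIsFractionRingSubtypeMem O)
      convert this; exact Algebra.algebra_ext _ _ (fun _ => rfl)
    obtain ⟨y, hy⟩ := IsIntegrallyClosed.isIntegral_iff.mp h
    rw [← hy]; exact y.2

lemma aux_two_unit [Finite (IsLocalRing.ResidueField ↥O)] {q : ℕ}
    (hq : Nat.card (IsLocalRing.ResidueField ↥O) = q) (hqodd : Odd q) :
    IsUnit (2 : ↥O) := by
  set k := IsLocalRing.ResidueField ↥O
  have : Fintype k := Fintype.ofFinite k
  rw [← IsLocalRing.residue_ne_zero_iff_isUnit]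
  intro h2
  have hcard : ((Fintype.card k : k)) = 0 := FiniteField.cast_card_eq_zero k
  have hqk : ((q : k)) = 0 := by
    rwa [← hq, Nat.card_eq_fintype_card]
  obtain ⟨m, hm⟩ := hqodd
  have h2k : ((2 : ℕ) : k) = 0 := by
    rw [Nat.cast_ofNat]
    simpa using (_root_.map_ofNat (IsLocalRing.residue ↥O) 2) ▸ h2
  have : (1 : k) = 0 := by
    have := hqk
    rw [hm] at this
    push_cast at this
    rw [Nat.cast_mul, h2k] at this
    simpa using this
  exact one_ne_zero this

lemma aux_pi2_integral {ϖ₂ : E₂} {w : ↥O} (hϖ₂ : ϖ₂ ^ 2 = algebraMap F E₂ (-(w : F))) :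
    IsIntegral ↥O ϖ₂ := by
  refine ⟨Polynomial.X ^ 2 + Polynomial.C w, ?_, ?_⟩
  · apply Polynomial.monic_X_pow_add_C w (by norm_num)
  · simp only [Polynomial.eval₂_add, Polynomial.eval₂_X_pow, Polynomial.eval₂_C, hϖ₂]
    have : (algebraMap ↥O E₂) w = algebraMap F E₂ (w : F) := rfl
    rw [this, ← _root_.map_add]; simp

lemma aux_IC_of_coords {ϖ₂ : E₂} {w : ↥O} (hϖ₂ : ϖ₂ ^ 2 = algebraMap F E₂ (-(w : F)))
    {a b : F} (ha : a ∈ O) (hb : b ∈ O) :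
    IsIntegral ↥O (algebraMap F E₂ a + b • ϖ₂) := by
  have h1 : IsIntegral ↥O (algebraMap F E₂ a) := by
    have : algebraMap F E₂ a = algebraMap ↥O E₂ (⟨a, ha⟩ : ↥O) := rfl
    rw [this]; exact isIntegral_algebraMap
  have h2 : IsIntegral ↥O (algebraMap F E₂ b) := by
    have : algebraMap F E₂ b = algebraMap ↥O E₂ (⟨b, hb⟩ : ↥O) := rfl
    rw [this]; exact isIntegral_algebraMap
  refine h1.add ?_
  rw [Algebra.smul_def]
  exact h2.mul (aux_pi2_integral O hϖ₂)

lemma aux_coords_mem (hrank2 : Module.finrank F E₂ = 2) {ϖ₂ : E₂}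
    (hgen2 : Algebra.adjoin F {ϖ₂} = ⊤)
    [Finite (IsLocalRing.ResidueField ↥O)] {q : ℕ}
    (hq : Nat.card (IsLocalRing.ResidueField ↥O) = q) (hqodd : Odd q)
    {w : ↥O} (hϖ : Irreducible w)
    (hϖ₂ : ϖ₂ ^ 2 = algebraMap F E₂ (-(w : F)))
    {a b : F} (hx : IsIntegral ↥O (algebraMap F E₂ a + b • ϖ₂)) :
    a ∈ O ∧ b ∈ O := by
  set x := algebraMap F E₂ a + b • ϖ₂ with hxdef
  have htr : IsIntegral ↥O (Algebra.trace F E₂ x) := Algebra.isIntegral_trace hx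
  rw [aux_trace_formula hrank2 hgen2 hϖ₂ a b, ← aux_mem_O_iff O] at htr
  have h2 := (aux_isUnit_iff O).mp (aux_two_unit O hq hqodd)
  have h2F : ((2 : ↥O) : F) = 2 := by
    have : (2 : ↥O) = 1 + 1 := by norm_num
    rw [this]; push_cast; ring
  rw [h2F] at h2
  have ha : a ∈ O := by
    have : a = (2 : F)⁻¹ * (2 * a) := by
      rw [← mul_assoc, inv_mul_cancel₀ h2.1, one_mul]
    rw [this]
    exact mul_mem h2.2 htr
  refine ⟨ha, ?_⟩
  have hbsq : IsIntegral ↥O ((b • ϖ₂) ^ 2) := by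
    have hy : IsIntegral ↥O (b • ϖ₂) := by
      have h : b • ϖ₂ = x - algebraMap F E₂ a := by rw [hxdef]; ring
      rw [h]
      refine hx.sub ?_
      have h' : algebraMap F E₂ a = algebraMap ↥O E₂ (⟨a, ha⟩ : ↥O) := rfl
      rw [h']; exact isIntegral_algebraMap
    exact hy.pow 2
  have hsq : (b • ϖ₂) ^ 2 = algebraMap F E₂ (b ^ 2 * (-(w : F))) := by
    rw [smul_pow, hϖ₂, Algebra.smul_def, ← _root_.map_mul]
  rw [hsq, isIntegral_algebraMap_iff (algebraMap F E₂).injective,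
    ← aux_mem_O_iff O] at hbsq
  have hwb : (w : F) * b ^ 2 ∈ O := by
    have h := O.neg_mem _ hbsq
    have h' : -(b ^ 2 * -(w:F)) = (w:F) * b ^ 2 := by ring
    rwa [h'] at h
  by_contra hb
  have hbne : b ≠ 0 := by rintro rfl; exact hb (O.zero_mem)
  have hbi : b⁻¹ ∈ O := (O.mem_or_inv_mem b).resolve_left hb
  set d : ↥O := ⟨b⁻¹, hbi⟩ with hd
  have hdnu : ¬IsUnit d := by
    intro h
    rw [aux_isUnit_iff O] at h
    apply hb
    have : ((d : F))⁻¹ = b := by rw [hd]; simp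
    rw [this] at h
    exact h.2
  set c : ↥O := ⟨(w:F) * b^2, hwb⟩ with hc
  have hw_eq : w = (c * d) * d := by
    apply Subtype.ext
    have : (((c * d) * d : ↥O) : F) = ((w:F) * b^2 * b⁻¹) * b⁻¹ := by push_cast [hc, hd]; ring
    have key : ((w:F) * b^2 * b⁻¹) * b⁻¹ = (w:F) := by
      field_simp
    rw [this, key]
  rcases hϖ.isUnit_or_isUnit hw_eq with h | h
  · exact hdnu (isUnit_of_mul_isUnit_right h)
  · exact hdnu h

lemma aux_NU {w : ↥O} (hϖ : Irreducible w) (a' b' : ↥O) :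
    IsUnit (a' ^ 2 + w * b' ^ 2) ↔ IsUnit a' := by
  have hwm : w ∈ IsLocalRing.maximalIdeal ↥O := by
    rw [IsLocalRing.mem_maximalIdeal, mem_nonunits_iff]; exact hϖ.not_isUnit
  constructor
  · intro h
    by_contra ha
    have ham : a' ∈ IsLocalRing.maximalIdeal ↥O := by
      rwa [IsLocalRing.mem_maximalIdeal, mem_nonunits_iff]
    have : a' ^ 2 + w * b' ^ 2 ∈ IsLocalRing.maximalIdeal ↥O := by
      exact add_mem (by rw [sq]; exact Ideal.mul_mem_right _ _ ham)
        (Ideal.mul_mem_right _ _ hwm)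
    rw [IsLocalRing.mem_maximalIdeal, mem_nonunits_iff] at this
    exact this h
  · intro h
    by_contra hN
    have hNm : a' ^ 2 + w * b' ^ 2 ∈ IsLocalRing.maximalIdeal ↥O := by
      rwa [IsLocalRing.mem_maximalIdeal, mem_nonunits_iff]
    have : a' ^ 2 ∈ IsLocalRing.maximalIdeal ↥O := by
      have := Ideal.sub_mem _ hNm (Ideal.mul_mem_right (b' ^ 2) _ hwm)
      simpa using this
    rw [IsLocalRing.mem_maximalIdeal, mem_nonunits_iff] at this
    exact this (h.pow 2)

lemma aux_IsUnitOfIC_iff (hrank2 : Module.finrank F E₂ = 2) {ϖ₂ : E₂}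
    (hgen2 : Algebra.adjoin F {ϖ₂} = ⊤)
    [Finite (IsLocalRing.ResidueField ↥O)] {q : ℕ}
    (hq : Nat.card (IsLocalRing.ResidueField ↥O) = q) (hqodd : Odd q)
    {w : ↥O} (hϖ : Irreducible w)
    (hϖ₂ : ϖ₂ ^ 2 = algebraMap F E₂ (-(w : F)))
    {a b : F} (ha : a ∈ O) (hb : b ∈ O) :
    IsUnitOfIC F O E₂ (algebraMap F E₂ a + b • ϖ₂) ↔ (a ≠ 0 ∧ a⁻¹ ∈ O) := by
  set x := algebraMap F E₂ a + b • ϖ₂ with hxdef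
  constructor
  · rintro ⟨hz, hint, hinv⟩
    rw [mem_integralClosure_iff] at hinv
    set c := (auxB hrank2 hgen2).repr x⁻¹ 0 with hc
    set d := (auxB hrank2 hgen2).repr x⁻¹ 1 with hd
    have hxc : x⁻¹ = algebraMap F E₂ c + d • ϖ₂ := aux_coords hrank2 hgen2 x⁻¹
    rw [hxc] at hinv
    obtain ⟨hcO, hdO⟩ := aux_coords_mem O hrank2 hgen2 hq hqodd hϖ hϖ₂ hinv
    have hNmul : (a^2 + (w:F)*b^2) * (c^2 + (w:F)*d^2) = 1 := by
      have := congrArg (Algebra.norm F) (mul_inv_cancel₀ hz)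
      rw [_root_.map_mul, _root_.map_one, hxc,
        aux_norm_formula hrank2 hgen2 hϖ₂ a b, aux_norm_formula hrank2 hgen2 hϖ₂ c d] at this
      exact this
    have hNU : IsUnit ((⟨a,ha⟩ : ↥O)^2 + w * (⟨b,hb⟩ : ↥O)^2) := by
      rw [aux_isUnit_iff O]
      have hv : (((⟨a,ha⟩ : ↥O)^2 + w * (⟨b,hb⟩ : ↥O)^2 : ↥O) : F) = a^2 + (w:F)*b^2 := by
        push_cast; ring
      rw [hv]
      refine ⟨left_ne_zero_of_mul_eq_one hNmul, ?_⟩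
      rw [inv_eq_of_mul_eq_one_right hNmul]
      exact add_mem (pow_mem hcO 2) (mul_mem ((w : ↥O)).2 (pow_mem hdO 2))
    rw [aux_NU O hϖ] at hNU
    rwa [aux_isUnit_iff O] at hNU
  · rintro ⟨ha0, hainv⟩
    have hU : IsUnit ((⟨a,ha⟩ : ↥O)^2 + w * (⟨b,hb⟩ : ↥O)^2) := by
      rw [aux_NU O hϖ, aux_isUnit_iff O]
      exact ⟨ha0, hainv⟩
    rw [aux_isUnit_iff O] at hU
    have hv : (((⟨a,ha⟩ : ↥O)^2 + w * (⟨b,hb⟩ : ↥O)^2 : ↥O) : F) = a^2 + (w:F)*b^2 := by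
      push_cast; ring
    rw [hv] at hU
    obtain ⟨hN0, hNinv⟩ := hU
    set N := a^2 + (w:F)*b^2 with hN
    have hz : x ≠ 0 := by
      intro h
      apply ha0
      have := (aux_repr hrank2 hgen2 a b).1
      rw [← hxdef, h] at this
      rw [show ((auxB hrank2 hgen2).repr (0:E₂)) = 0 from _root_.map_zero _] at this
      simpa using this.symm
    have hxy : x * (algebraMap F E₂ (a * N⁻¹) + (-(b * N⁻¹)) • ϖ₂) = 1 := by
      rw [hxdef, aux_mul_formula hϖ₂]
      have e1 : a * (a * N⁻¹) - (w:F) * (b * -(b * N⁻¹)) = 1 := by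
        field_simp [hN]
        ring
      have e2 : a * -(b * N⁻¹) + b * (a * N⁻¹) = 0 := by ring
      rw [e1, e2, _root_.map_one, zero_smul, add_zero]
    refine ⟨hz, (mem_integralClosure_iff _ _).mpr (aux_IC_of_coords O hϖ₂ ha hb), ?_⟩
    rw [inv_eq_of_mul_eq_one_right hxy]
    exact (mem_integralClosure_iff _ _).mpr
      (aux_IC_of_coords O hϖ₂ (mul_mem ha hNinv) (O.neg_mem _ (mul_mem hb hNinv)))

lemma aux_InMaxIC_iff (hrank2 : Module.finrank F E₂ = 2) {ϖ₂ : E₂}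
    (hgen2 : Algebra.adjoin F {ϖ₂} = ⊤)
    [Finite (IsLocalRing.ResidueField ↥O)] {q : ℕ}
    (hq : Nat.card (IsLocalRing.ResidueField ↥O) = q) (hqodd : Odd q)
    {w : ↥O} (hϖ : Irreducible w)
    (hϖ₂ : ϖ₂ ^ 2 = algebraMap F E₂ (-(w : F))) (a b : F) :
    InMaxIC F O E₂ (algebraMap F E₂ a + b • ϖ₂) ↔
      (a ∈ O ∧ b ∈ O ∧ ¬(a ≠ 0 ∧ a⁻¹ ∈ O)) := by
  constructor
  · rintro ⟨hint, hnu⟩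
    rw [mem_integralClosure_iff] at hint
    obtain ⟨ha, hb⟩ := aux_coords_mem O hrank2 hgen2 hq hqodd hϖ hϖ₂ hint
    refine ⟨ha, hb, ?_⟩
    intro h
    exact hnu ((aux_IsUnitOfIC_iff O hrank2 hgen2 hq hqodd hϖ hϖ₂ ha hb).mpr h)
  · rintro ⟨ha, hb, h⟩
    refine ⟨(mem_integralClosure_iff _ _).mpr (aux_IC_of_coords O hϖ₂ ha hb), ?_⟩
    intro hu
    exact h ((aux_IsUnitOfIC_iff O hrank2 hgen2 hq hqodd hϖ hϖ₂ ha hb).mp hu)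

section Residue

variable [Finite (IsLocalRing.ResidueField ↥O)]

lemma aux_cast_ne {q : ℕ} (hq : Nat.card (IsLocalRing.ResidueField ↥O) = q) {n : ℕ}
    (hn : n ∣ q - 1) (hn0 : n ≠ 0) : (n : IsLocalRing.ResidueField ↥O) ≠ 0 := by
  set k := IsLocalRing.ResidueField ↥O
  have : Fintype k := Fintype.ofFinite _
  have hq2 : 2 ≤ q := by
    rw [← hq, Nat.card_eq_fintype_card]
    exact Fintype.one_lt_card
  have hcard : ((q : k)) = 0 := by
    rw [← hq, Nat.card_eq_fintype_card]
    exact FiniteField.cast_card_eq_zero _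
  intro h
  obtain ⟨m, hm⟩ := hn
  have hq1 : ((q - 1 : ℕ) : k) = 0 := by rw [hm, Nat.cast_mul, h, zero_mul]
  have : (q : k) = 1 := by
    have hqe : q = (q - 1) + 1 := by omega
    rw [hqe]; push_cast [hq1]; ring
  rw [hcard] at this
  exact one_ne_zero this.symm

lemma aux_unit_eq_one {u : (↥O)ˣ} {n : ℕ} (hn : u ^ n = 1)
    (hnk : (n : IsLocalRing.ResidueField ↥O) ≠ 0)
    (hres : IsLocalRing.residue ↥O ↑u = 1) : u = 1 := by
  set x : ↥O := ↑u with hx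
  have hgeo : (∑ i ∈ Finset.range n, x ^ i) * (x - 1) = x ^ n - 1 := geom_sum_mul x n
  have hxn : x ^ n = 1 := by
    rw [hx, ← Units.val_pow_eq_pow_val, hn, Units.val_one]
  rw [hxn, sub_self] at hgeo
  have hS : IsUnit (∑ i ∈ Finset.range n, x ^ i) := by
    rw [← IsLocalRing.residue_ne_zero_iff_isUnit]
    rw [_root_.map_sum]
    have : ∀ i ∈ Finset.range n, IsLocalRing.residue ↥O (x ^ i) = 1 := by
      intro i _
      rw [_root_.map_pow, hres, one_pow]
    rw [Finset.sum_congr rfl this, Finset.sum_const, Finset.card_range, nsmul_eq_mul, mul_one]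
    exact hnk
  have : x - 1 = 0 := by
    obtain ⟨v, hv⟩ := hS
    have := congrArg (fun y => (↑v⁻¹ : ↥O) * y) hgeo
    simp only [← hv, ← mul_assoc] at this
    rw [Units.inv_mul, one_mul, mul_zero] at this
    exact this
  ext
  rw [show (u:↥O) = 1 by linear_combination this]
  rfl

lemma aux_res_order {q : ℕ} (hq : Nat.card (IsLocalRing.ResidueField ↥O) = q) {ζ : (↥O)ˣ}
    (hζ : orderOf ζ = q - 1) (hq1 : q - 1 ≠ 0) :
    orderOf (Units.map (IsLocalRing.residue ↥O : ↥O →* IsLocalRing.ResidueField ↥O) ζ)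
      = q - 1 := by
  set r := Units.map (IsLocalRing.residue ↥O : ↥O →* IsLocalRing.ResidueField ↥O) with hr
  set d := orderOf (r ζ) with hd
  have hdvd : d ∣ q - 1 := by rw [← hζ]; exact orderOf_map_dvd _ _
  have hd0 : d ≠ 0 := by
    have hpos : 0 < orderOf (r ζ) := orderOf_pos _
    omega
  have hres : IsLocalRing.residue ↥O ↑(ζ ^ d) = 1 := by
    have h1 : (r ζ) ^ d = 1 := pow_orderOf_eq_one _
    have h2 : r (ζ ^ d) = 1 := by rw [_root_.map_pow, h1]
    have h3 := congrArg Units.val h2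
    simpa [hr] using h3
  have hn : (ζ ^ d) ^ ((q-1)/d) = 1 := by
    rw [← pow_mul, Nat.mul_div_cancel' hdvd, ← hζ]
    exact pow_orderOf_eq_one ζ
  have hnk : (((q-1)/d : ℕ) : IsLocalRing.ResidueField ↥O) ≠ 0 :=
    aux_cast_ne O hq (Nat.div_dvd_of_dvd hdvd) (by
      rcases hdvd with ⟨m, hm⟩
      rw [hm, Nat.mul_div_cancel_left m (Nat.pos_of_ne_zero hd0)]
      rintro rfl
      rw [mul_zero] at hm
      exact hq1 hm)
  have hone : ζ ^ d = 1 := aux_unit_eq_one O hn hnk hres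
  have hdvd2 : (q - 1) ∣ d := by
    rw [← hζ]
    exact orderOf_dvd_of_pow_eq_one hone
  exact Nat.dvd_antisymm hdvd hdvd2

lemma aux_res_iff (a' : ↥O) (z : (↥O)ˣ) :
    IsLocalRing.residue ↥O (a' * ↑z⁻¹ - 1) = 0 ↔
      IsLocalRing.residue ↥O a' = IsLocalRing.residue ↥O ↑z := by
  have hz1 : IsLocalRing.residue ↥O ((z⁻¹ : (↥O)ˣ) : ↥O) *
      IsLocalRing.residue ↥O (z : ↥O) = 1 := by
    rw [← _root_.map_mul, Units.inv_mul, _root_.map_one]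
  rw [_root_.map_sub, _root_.map_one, sub_eq_zero, _root_.map_mul]
  constructor
  · intro h
    calc IsLocalRing.residue ↥O a'
        = (IsLocalRing.residue ↥O a' * IsLocalRing.residue ↥O ((z⁻¹:(↥O)ˣ):↥O)) *
          IsLocalRing.residue ↥O (z:↥O) := by rw [mul_assoc, hz1, mul_one]
      _ = _ := by rw [h, one_mul]
  · intro h
    rw [h, mul_comm, hz1]

lemma aux_class {q : ℕ} (hq : Nat.card (IsLocalRing.ResidueField ↥O) = q) {ζ : (↥O)ˣ}
    (hζ : orderOf ζ = q - 1) (hq1 : q - 1 ≠ 0) (a' : ↥O) (ha : IsUnit a') :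
    ∃! j : ℕ, j < q - 1 ∧
      IsLocalRing.residue ↥O a' = IsLocalRing.residue ↥O ↑(ζ ^ j) := by
  set k := IsLocalRing.ResidueField ↥O
  set r := Units.map (IsLocalRing.residue ↥O : ↥O →* k) with hrdef
  have : Fintype k := Fintype.ofFinite _
  have hord := aux_res_order O hq hζ hq1
  have hcardu : Fintype.card (kˣ) = q - 1 := by
    rw [Fintype.card_units, ← Nat.card_eq_fintype_card, hq]
  set f : Fin (q - 1) → kˣ := fun j => (r ζ) ^ (j : ℕ) with hf
  have hinj : Function.Injective f := by
    intro j1 j2 h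
    have := pow_injOn_Iio_orderOf (x := r ζ)
      (by rw [hord]; exact Set.mem_Iio.mpr j1.2) (by rw [hord]; exact Set.mem_Iio.mpr j2.2) h
    exact Fin.ext this
  have hbij : Function.Bijective f :=
    (Fintype.bijective_iff_injective_and_card f).mpr ⟨hinj, by simp [hcardu]⟩
  obtain ⟨j0, hj0⟩ := hbij.2 (ha.unit.map (IsLocalRing.residue ↥O : ↥O →* k))
  have hval : ∀ j : ℕ, ((r ζ) ^ j : kˣ) = r (ζ ^ j) := by
    intro j; rw [_root_.map_pow]
  refine ⟨(j0 : ℕ), ⟨j0.2, ?_⟩, ?_⟩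
  · have := congrArg Units.val hj0
    rw [hf] at this
    simp only at this
    rw [hval] at this
    have h2 : (r (ζ ^ (j0:ℕ)) : k) = IsLocalRing.residue ↥O ↑(ζ ^ (j0:ℕ)) := rfl
    have h3 : ((ha.unit.map (IsLocalRing.residue ↥O : ↥O →* k)) : k) =
        IsLocalRing.residue ↥O a' := by
      simp [IsUnit.unit_spec]
    rw [h2, h3] at this
    exact this.symm
  · rintro j ⟨hjlt, hjres⟩
    have heq : f ⟨j, hjlt⟩ = f j0 := by
      rw [hj0, hf]
      apply Units.ext
      simp only
      rw [hval]
      have h2 : (r (ζ ^ j) : k) = IsLocalRing.residue ↥O ↑(ζ ^ j) := rfl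
      have h3 : ((ha.unit.map (IsLocalRing.residue ↥O : ↥O →* k)) : k) =
          IsLocalRing.residue ↥O a' := by simp [IsUnit.unit_spec]
      rw [h2, h3]
      exact hjres.symm
    have := hinj heq
    exact congrArg Fin.val this

end Residue

end Aux16

theorem stmt16
    (F : Type) [Field F] (O : ValuationSubring F) [IsDiscreteValuationRing ↥O]
    (hcomplete : IsAdicComplete (IsLocalRing.maximalIdeal ↥O) ↥O)
    (q : ℕ) [Finite (IsLocalRing.ResidueField ↥O)]
    (hq : Nat.card (IsLocalRing.ResidueField ↥O) = q)
    (hqodd : Odd q) (hq4 : 4 ∣ q - 1)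
    (ϖ : ↥O) (hϖ : Irreducible ϖ)
    (ζ : (↥O)ˣ) (hζ : orderOf ζ = q - 1)
    (E₂ : Type) [Field E₂] [Algebra F E₂] [FiniteDimensional F E₂]
    (hrank2 : Module.finrank F E₂ = 2)
    (ϖ₂ : E₂) (hϖ₂ : ϖ₂ ^ 2 = algebraMap F E₂ (-(ϖ : F)))
    (hgen2 : Algebra.adjoin F {ϖ₂} = ⊤)
    (i : ℂ) (hi : i ^ 2 = -1)
    (η : Fˣ →* ℂˣ)
    (hηϖ : etaExt η ((ϖ : F)) = 1)
    (hη1 : ∀ m : ↥O, m ∈ IsLocalRing.maximalIdeal ↥O → etaExt η (((1 + m : ↥O) : F)) = 1)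
    (hηζ : etaExt η (((ζ : ↥O) : F)) = i) :
    (∀ u : E₂, IsUnitOfIC F O E₂ u → InMaxIC F O E₂ (u - 1) →
      etaExt η (Algebra.norm F u) = 1) ∧
    (∃ u : E₂, IsUnitOfIC F O E₂ u ∧ etaExt η (Algebra.norm F u) ≠ 1) ∧
    ∃ T : Finset E₂,
      (∀ x ∈ T, IsUnitOfIC F O E₂ x) ∧
      (∀ u : E₂, IsUnitOfIC F O E₂ u → ∃! x : E₂, x ∈ T ∧ InMaxIC F O E₂ (u * x⁻¹ - 1)) ∧
      ∑ x ∈ T, etaExt η (Algebra.norm F x) = 0 := by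
    classical
  have hfin : Fintype (IsLocalRing.ResidueField ↥O) := Fintype.ofFinite _
  have hq2 : 2 ≤ q := by
    rw [← hq, Nat.card_eq_fintype_card]
    exact Fintype.one_lt_card
  have hq1 : q - 1 ≠ 0 := by omega
  set B := auxB hrank2 hgen2 with hB
  set zF : F := ((ζ : ↥O) : F) with hzF
  have hzmem : zF ∈ O := (ζ : ↥O).2
  have hz0 : zF ≠ 0 := by
    intro h
    exact Units.ne_zero ζ (Subtype.ext h)
  have hzinvF : zF * (((ζ⁻¹ : (↥O)ˣ) : ↥O) : F) = 1 := by
    rw [hzF, ← Subring.coe_mul]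
    norm_cast
    rw [mul_inv_cancel]
    rfl
  have hzinv : zF⁻¹ ∈ O := by
    rw [inv_eq_of_mul_eq_one_right hzinvF]; exact ((ζ⁻¹ : (↥O)ˣ) : ↥O).2
  have hzj0 : ∀ j : ℕ, zF ^ j ≠ 0 := fun j => pow_ne_zero _ hz0
  have hzjmem : ∀ j : ℕ, zF ^ j ∈ O := fun j => pow_mem hzmem j
  have hzjinv : ∀ j : ℕ, (zF ^ j)⁻¹ ∈ O := fun j => by
    rw [← inv_pow]; exact pow_mem hzinv j
  have hzjF : ∀ j : ℕ, zF ^ j = ((((ζ ^ j : (↥O)ˣ) : ↥O)) : F) := fun j => by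
    rw [hzF]; push_cast; ring
  have hxunit : ∀ j : ℕ, IsUnitOfIC F O E₂ (algebraMap F E₂ (zF ^ j)) := fun j => by
    rw [show algebraMap F E₂ (zF ^ j) = algebraMap F E₂ (zF ^ j) + (0:F) • ϖ₂ by
      rw [zero_smul, add_zero]]
    exact (aux_IsUnitOfIC_iff O hrank2 hgen2 hq hqodd hϖ hϖ₂ (hzjmem j) O.zero_mem).mpr
      ⟨hzj0 j, hzjinv j⟩
  have hnormz : ∀ j : ℕ, Algebra.norm F (algebraMap F E₂ (zF ^ j)) = zF ^ (2 * j) :=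
    fun j => by rw [Algebra.norm_algebraMap, hrank2, ← pow_mul, mul_comm]
  have hetaz : ∀ j : ℕ, etaExt η (zF ^ (2 * j)) = (-1 : ℂ) ^ j := fun j => by
    rw [aux_etaExt_pow η hz0, hηζ, pow_mul, hi]
  refine ⟨?_, ?_, ?_⟩
  · -- part 1
    intro u hu hmax
    set a := B.repr u 0 with ha_def
    set b := B.repr u 1 with hb_def
    have hu_co : u = algebraMap F E₂ a + b • ϖ₂ := aux_coords hrank2 hgen2 u
    have hsub : u - 1 = algebraMap F E₂ (a - 1) + b • ϖ₂ := by
      rw [hu_co, _root_.map_sub, _root_.map_one]; ring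
    rw [hsub] at hmax
    obtain ⟨ha1, hbO, hnu⟩ :=
      (aux_InMaxIC_iff O hrank2 hgen2 hq hqodd hϖ hϖ₂ (a-1) b).mp hmax
    have haO : a ∈ O := by
      have h := add_mem ha1 O.one_mem
      simpa using h
    set m' : ↥O := ⟨a - 1, ha1⟩ with hm'
    have hm'mem : m' ∈ IsLocalRing.maximalIdeal ↥O := by
      rw [IsLocalRing.mem_maximalIdeal, mem_nonunits_iff]
      intro h
      rw [aux_isUnit_iff O] at h
      exact hnu h
    set b' : ↥O := ⟨b, hbO⟩ with hb'
    have hϖmem : ϖ ∈ IsLocalRing.maximalIdeal ↥O := by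
      rw [IsLocalRing.mem_maximalIdeal, mem_nonunits_iff]; exact hϖ.not_isUnit
    set M : ↥O := 2 * m' + m' ^ 2 + ϖ * b' ^ 2 with hM
    have hMmem : M ∈ IsLocalRing.maximalIdeal ↥O := by
      refine add_mem (add_mem ?_ ?_) ?_
      · exact Ideal.mul_mem_left _ 2 hm'mem
      · rw [sq]; exact Ideal.mul_mem_right _ _ hm'mem
      · exact Ideal.mul_mem_right _ _ hϖmem
    have hm'c : (m' : F) = a - 1 := rfl
    have hb'c : (b' : F) = b := rfl
    have h2F : ((2 : ↥O) : F) = 2 := by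
      have h12 : (2 : ↥O) = 1 + 1 := by norm_num
      rw [h12]; push_cast; ring
    have hnorm : Algebra.norm F u = ((1 + M : ↥O) : F) := by
      rw [hu_co, aux_norm_formula hrank2 hgen2 hϖ₂ a b, hM]
      push_cast [hm'c, hb'c, h2F]
      ring
    rw [hnorm]
    exact hη1 M hMmem
  · -- part 2
    refine ⟨algebraMap F E₂ zF, ?_, ?_⟩
    · have h := hxunit 1
      rwa [pow_one] at h
    · have hnorm : Algebra.norm F (algebraMap F E₂ zF) = zF ^ (2*1) := by
        have h := hnormz 1
        rwa [pow_one] at h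
      rw [hnorm, hetaz 1, pow_one]
      norm_num
  · -- part 3
    set T : Finset E₂ := (Finset.range (q-1)).image (fun j => algebraMap F E₂ (zF ^ j))
      with hT
    have hinjT : ∀ j1 ∈ Finset.range (q-1), ∀ j2 ∈ Finset.range (q-1),
        algebraMap F E₂ (zF ^ j1) = algebraMap F E₂ (zF ^ j2) → j1 = j2 := by
      intro j1 h1 j2 h2 h
      rw [Finset.mem_range] at h1 h2
      have h3 : zF ^ j1 = zF ^ j2 := (algebraMap F E₂).injective h
      rw [hzjF, hzjF] at h3
      have h4 : ((ζ ^ j1 : (↥O)ˣ) : ↥O) = ((ζ ^ j2 : (↥O)ˣ) : ↥O) := Subtype.ext h3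
      have h5 : (ζ : (↥O)ˣ) ^ j1 = ζ ^ j2 := Units.ext h4
      exact pow_injOn_Iio_orderOf (by rw [hζ]; exact Set.mem_Iio.mpr h1)
        (by rw [hζ]; exact Set.mem_Iio.mpr h2) h5
    refine ⟨T, ?_, ?_, ?_⟩
    · intro x hx
      rw [hT, Finset.mem_image] at hx
      obtain ⟨j, _, rfl⟩ := hx
      exact hxunit j
    · intro u hu
      set a := B.repr u 0 with ha_def
      set b := B.repr u 1 with hb_def
      have hu_co : u = algebraMap F E₂ a + b • ϖ₂ := aux_coords hrank2 hgen2 u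
      have hint : IsIntegral ↥O u := (mem_integralClosure_iff _ _).mp hu.2.1
      have hmem : a ∈ O ∧ b ∈ O := by
        rw [hu_co] at hint
        exact aux_coords_mem O hrank2 hgen2 hq hqodd hϖ hϖ₂ hint
      obtain ⟨haO, hbO⟩ := hmem
      set a' : ↥O := ⟨a, haO⟩ with ha'
      have haU : IsUnit a' := by
        rw [aux_isUnit_iff O]
        have h := hu
        rw [hu_co] at h
        exact (aux_IsUnitOfIC_iff O hrank2 hgen2 hq hqodd hϖ hϖ₂ haO hbO).mp h
      have key : ∀ j : ℕ, (InMaxIC F O E₂ (u * (algebraMap F E₂ (zF ^ j))⁻¹ - 1) ↔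
          IsLocalRing.residue ↥O a' = IsLocalRing.residue ↥O ↑(ζ ^ j)) := by
        intro j
        have hcinv : (zF ^ j)⁻¹ = ((((ζ ^ j : (↥O)ˣ)⁻¹ : (↥O)ˣ) : ↥O) : F) := by
          have hmul : (zF ^ j) * ((((ζ ^ j : (↥O)ˣ)⁻¹ : (↥O)ˣ) : ↥O) : F) = 1 := by
            rw [hzjF j, ← Subring.coe_mul]
            norm_cast
            rw [mul_inv_cancel]
            rfl
          exact inv_eq_of_mul_eq_one_right hmul
        have hprod : u * (algebraMap F E₂ (zF ^ j))⁻¹ - 1 =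
            algebraMap F E₂ (a * (zF^j)⁻¹ - 1) + (b * (zF^j)⁻¹) • ϖ₂ := by
          rw [← _root_.map_inv₀, hu_co,
            show algebraMap F E₂ ((zF^j)⁻¹) = algebraMap F E₂ ((zF^j)⁻¹) + (0:F) • ϖ₂ by
              rw [zero_smul, add_zero],
            aux_mul_formula hϖ₂]
          rw [mul_zero b, mul_zero, sub_zero, mul_zero a, zero_add, _root_.map_sub,
            _root_.map_one]
          ring
        have hm1 : a * (zF^j)⁻¹ - 1 ∈ O := sub_mem (mul_mem haO (hzjinv j)) O.one_mem
        have hm2 : b * (zF^j)⁻¹ ∈ O := mul_mem hbO (hzjinv j)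
        have hliftF : a * (zF^j)⁻¹ - 1 = ((a' * ↑((ζ^j : (↥O)ˣ))⁻¹ - 1 : ↥O) : F) := by
          rw [hcinv]
          push_cast
          rw [show a = (a' : F) from rfl]
        have heq : (⟨a * (zF^j)⁻¹ - 1, hm1⟩ : ↥O) = a' * ↑((ζ^j : (↥O)ˣ))⁻¹ - 1 :=
          Subtype.ext hliftF
        rw [hprod, aux_InMaxIC_iff O hrank2 hgen2 hq hqodd hϖ hϖ₂]
        constructor
        · rintro ⟨_, _, hcond⟩
          have hnu : ¬IsUnit (⟨a * (zF^j)⁻¹ - 1, hm1⟩ : ↥O) := fun h =>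
            hcond ((aux_isUnit_iff O).mp h)
          have hres0 : IsLocalRing.residue ↥O (⟨a * (zF^j)⁻¹ - 1, hm1⟩ : ↥O) = 0 := by
            by_contra h
            exact hnu ((IsLocalRing.residue_ne_zero_iff_isUnit _).mp h)
          rw [heq] at hres0
          exact (aux_res_iff O _ _).mp hres0
        · intro hres
          refine ⟨hm1, hm2, ?_⟩
          intro hcond
          have hres0 : IsLocalRing.residue ↥O (a' * ↑((ζ^j : (↥O)ˣ))⁻¹ - 1) = 0 :=
            (aux_res_iff O _ _).mpr hres
          rw [← heq] at hres0
          have hun : IsUnit (⟨a * (zF^j)⁻¹ - 1, hm1⟩ : ↥O) := (aux_isUnit_iff O).mpr hcond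
          rw [← IsLocalRing.residue_ne_zero_iff_isUnit] at hun
          exact hun hres0
      obtain ⟨j0, ⟨hj0lt, hj0res⟩, hj0uniq⟩ := aux_class O hq hζ hq1 a' haU
      refine ⟨algebraMap F E₂ (zF ^ j0), ⟨?_, (key j0).mpr hj0res⟩, ?_⟩
      · rw [hT]
        exact Finset.mem_image_of_mem _ (Finset.mem_range.mpr hj0lt)
      · rintro y ⟨hyT, hymax⟩
        rw [hT, Finset.mem_image] at hyT
        obtain ⟨j, hj, rfl⟩ := hyT
        have hres := (key j).mp hymax
        have hjj : j = j0 := hj0uniq j ⟨Finset.mem_range.mp hj, hres⟩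
        rw [hjj]
    · rw [hT, Finset.sum_image hinjT]
      have hterm : ∀ j ∈ Finset.range (q-1),
          etaExt η (Algebra.norm F (algebraMap F E₂ (zF ^ j))) = (-1:ℂ)^j := by
        intro j _
        rw [hnormz j, hetaz j]
      rw [Finset.sum_congr rfl hterm, neg_one_geom_sum, if_pos]
      exact Nat.Odd.sub_odd hqodd odd_one
end
end
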